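/- Let n₁, n₂ ≥ 1, let M¹ : Fin n₁ → Fin n₂ → ℝ and M² : Fin n₂ → Fin n₁ → ℝ be payoff matrices, let γ₁, γ₂ ∈ ℝ, and let 0 ≤ ε ≤ min (1/n₁) (1/n₂). Suppose (σₜ) and (ςₜ) are sequences with σₜ ∈ Δ_ε(n₁) and ςₜ ∈ Δ_ε(n₂), and let Z¹ₜ = (1/t) ∑_{s=1}^{t} σₛ and Z²ₜ = (1/t) ∑_{s=1}^{t} ςₛ denote the time-average strategies. If for every t the strategy σ_{t+1} maximizes r(·, Z²ₜ, M¹) (with parameter γ₁) over Δ_ε(n₁) and ς_{t+1} maximizes r(·, Z¹ₜ, M²) (with parameter γ₂) over Δ_ε(n₂), and if σₜ → σ and ςₜ → ς componentwise, then (σ, ς) is a risk-averse equilibrium: σ maximizes r(·, ς, M¹) over Δ_ε(n₁) and ς maximizes r(·, σ, M²) over Δ_ε(n₂). -/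
import Mathlib


open Finset

noncomputable section

/-- The ε-constrained simplex: vectors with all coordinates ≥ ε summing to 1. -/
def simplexEps (m : ℕ) (ε : ℝ) : Set (Fin m → ℝ) :=
  {σ | (∀ i, ε ≤ σ i) ∧ ∑ i, σ i = 1}

/-- Expected utility u(σ, ς, M). -/
def expUtil {m k : ℕ} (σ : Fin m → ℝ) (ς : Fin k → ℝ) (M : Fin m → Fin k → ℝ) : ℝ :=
  ∑ j, ∑ i, σ j * ς i * M j i

/-- Expected payoff of own action j against opponent mixed strategy ς: M̄ j. -/
def meanPay {m k : ℕ} (ς : Fin k → ℝ) (M : Fin m → Fin k → ℝ) (j : Fin m) : ℝ :=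
  ∑ i, ς i * M j i

/-- Entries of the ς-weighted covariance matrix Σ_{M,ς}. -/
def covEnt {m k : ℕ} (ς : Fin k → ℝ) (M : Fin m → Fin k → ℝ) (j j' : Fin m) : ℝ :=
  ∑ i, ς i * (M j i - meanPay ς M j) * (M j' i - meanPay ς M j')

/-- Utility variance Var(σ, ς, M) = σᵀ Σ_{M,ς} σ. -/
def utilVar {m k : ℕ} (σ : Fin m → ℝ) (ς : Fin k → ℝ) (M : Fin m → Fin k → ℝ) : ℝ :=
  ∑ j, ∑ j', σ j * σ j' * covEnt ς M j j'

/-- Total utility r(σ, ς, M) = u(σ, ς, M) − γ · Var(σ, ς, M). -/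
def totalUtil {m k : ℕ} (γ : ℝ) (σ : Fin m → ℝ) (ς : Fin k → ℝ)
    (M : Fin m → Fin k → ℝ) : ℝ :=
  expUtil σ ς M - γ * utilVar σ ς M


lemma totalUtil_cont {m k : ℕ} (γ : ℝ) (M : Fin m → Fin k → ℝ) :
    Continuous fun p : (Fin m → ℝ) × (Fin k → ℝ) => totalUtil γ p.1 p.2 M := by
  unfold totalUtil expUtil utilVar covEnt meanPay
  fun_prop

lemma totalUtil_tendsto {m k : ℕ} (γ : ℝ) (M : Fin m → Fin k → ℝ)
    {f : ℕ → Fin m → ℝ} {g : ℕ → Fin k → ℝ} {a : Fin m → ℝ} {b : Fin k → ℝ}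
    (hf : Filter.Tendsto f Filter.atTop (nhds a))
    (hg : Filter.Tendsto g Filter.atTop (nhds b)) :
    Filter.Tendsto (fun t => totalUtil γ (f t) (g t) M) Filter.atTop
      (nhds (totalUtil γ a b M)) := by
  have h := ((totalUtil_cont γ M).tendsto (a, b)).comp (Filter.Tendsto.prodMk_nhds hf hg)
  simpa [Function.comp_def] using h

lemma cesaro_avg {k : ℕ} (v : ℕ → Fin k → ℝ) (x : Fin k → ℝ)
    (h : ∀ i, Filter.Tendsto (fun t => v t i) Filter.atTop (nhds (x i))) :
    Filter.Tendsto (fun t : ℕ => fun i => (1 / (t : ℝ)) * ∑ s ∈ Finset.Icc 1 t, v s i)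
      Filter.atTop (nhds x) := by
  rw [tendsto_pi_nhds]
  intro i
  have h1 : Filter.Tendsto (fun t => v (t + 1) i) Filter.atTop (nhds (x i)) :=
    (h i).comp (Filter.tendsto_add_atTop_nat 1)
  have h2 := h1.cesaro
  convert h2 using 2 with t
  rw [one_div]
  congr 1
  rw [← Finset.Ico_add_one_right_eq_Icc, Finset.sum_Ico_eq_sum_range]
  simp [add_comm]

set_option maxHeartbeats 1000000 in
theorem sfp_limit_is_rae (n₁ n₂ : ℕ) (hn₁ : 1 ≤ n₁) (hn₂ : 1 ≤ n₂)
    (M₁ : Fin n₁ → Fin n₂ → ℝ) (M₂ : Fin n₂ → Fin n₁ → ℝ)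
    (γ₁ γ₂ : ℝ) (ε : ℝ) (hε : 0 ≤ ε)
    (hε' : ε ≤ min (1 / (n₁ : ℝ)) (1 / (n₂ : ℝ)))
    (σseq : ℕ → Fin n₁ → ℝ) (ςseq : ℕ → Fin n₂ → ℝ)
    (hσmem : ∀ t, σseq t ∈ simplexEps n₁ ε) (hςmem : ∀ t, ςseq t ∈ simplexEps n₂ ε)
    (hσbr : ∀ t : ℕ, 1 ≤ t → ∀ σ' ∈ simplexEps n₁ ε,
      totalUtil γ₁ σ' (fun i => (1 / (t : ℝ)) * ∑ s ∈ Finset.Icc 1 t, ςseq s i) M₁ ≤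
        totalUtil γ₁ (σseq (t + 1))
          (fun i => (1 / (t : ℝ)) * ∑ s ∈ Finset.Icc 1 t, ςseq s i) M₁)
    (hςbr : ∀ t : ℕ, 1 ≤ t → ∀ ς' ∈ simplexEps n₂ ε,
      totalUtil γ₂ ς' (fun i => (1 / (t : ℝ)) * ∑ s ∈ Finset.Icc 1 t, σseq s i) M₂ ≤
        totalUtil γ₂ (ςseq (t + 1))
          (fun i => (1 / (t : ℝ)) * ∑ s ∈ Finset.Icc 1 t, σseq s i) M₂)
    (σ : Fin n₁ → ℝ) (ς : Fin n₂ → ℝ)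
    (hσlim : ∀ i, Filter.Tendsto (fun t => σseq t i) Filter.atTop (nhds (σ i)))
    (hςlim : ∀ i, Filter.Tendsto (fun t => ςseq t i) Filter.atTop (nhds (ς i))) :
    (∀ σ' ∈ simplexEps n₁ ε, totalUtil γ₁ σ' ς M₁ ≤ totalUtil γ₁ σ ς M₁) ∧
      (∀ ς' ∈ simplexEps n₂ ε, totalUtil γ₂ ς' σ M₂ ≤ totalUtil γ₂ ς σ M₂) := by
  have hZ₂ : Filter.Tendsto
      (fun t : ℕ => fun i => (1 / (t : ℝ)) * ∑ s ∈ Finset.Icc 1 t, ςseq s i)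
      Filter.atTop (nhds ς) := cesaro_avg ςseq ς hςlim
  have hZ₁ : Filter.Tendsto
      (fun t : ℕ => fun i => (1 / (t : ℝ)) * ∑ s ∈ Finset.Icc 1 t, σseq s i)
      Filter.atTop (nhds σ) := cesaro_avg σseq σ hσlim
  have hσ1 : Filter.Tendsto (fun t => σseq (t + 1)) Filter.atTop (nhds σ) := by
    rw [tendsto_pi_nhds]
    exact fun i => (hσlim i).comp (Filter.tendsto_add_atTop_nat 1)
  have hς1 : Filter.Tendsto (fun t => ςseq (t + 1)) Filter.atTop (nhds ς) := by
    rw [tendsto_pi_nhds]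
    exact fun i => (hςlim i).comp (Filter.tendsto_add_atTop_nat 1)
  constructor
  · intro σ' hσ'
    have hL : Filter.Tendsto
        (fun t : ℕ => totalUtil γ₁ σ'
          (fun i => (1 / (t : ℝ)) * ∑ s ∈ Finset.Icc 1 t, ςseq s i) M₁)
        Filter.atTop (nhds (totalUtil γ₁ σ' ς M₁)) :=
      totalUtil_tendsto γ₁ M₁ tendsto_const_nhds hZ₂
    have hR : Filter.Tendsto
        (fun t : ℕ => totalUtil γ₁ (σseq (t + 1))
          (fun i => (1 / (t : ℝ)) * ∑ s ∈ Finset.Icc 1 t, ςseq s i) M₁)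
        Filter.atTop (nhds (totalUtil γ₁ σ ς M₁)) :=
      totalUtil_tendsto γ₁ M₁ hσ1 hZ₂
    refine le_of_tendsto_of_tendsto hL hR ?_
    filter_upwards [Filter.eventually_ge_atTop 1] with t ht
    exact hσbr t ht σ' hσ'
  · intro ς' hς'
    have hL : Filter.Tendsto
        (fun t : ℕ => totalUtil γ₂ ς'
          (fun i => (1 / (t : ℝ)) * ∑ s ∈ Finset.Icc 1 t, σseq s i) M₂)
        Filter.atTop (nhds (totalUtil γ₂ ς' σ M₂)) :=
      totalUtil_tendsto γ₂ M₂ tendsto_const_nhds hZ₁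
    have hR : Filter.Tendsto
        (fun t : ℕ => totalUtil γ₂ (ςseq (t + 1))
          (fun i => (1 / (t : ℝ)) * ∑ s ∈ Finset.Icc 1 t, σseq s i) M₂)
        Filter.atTop (nhds (totalUtil γ₂ ς σ M₂)) :=
      totalUtil_tendsto γ₂ M₂ hς1 hZ₁
    refine le_of_tendsto_of_tendsto hL hR ?_
    filter_upwards [Filter.eventually_ge_atTop 1] with t ht
    exact hςbr t ht ς' hς'
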